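/- Let 𝒳 be a finite set. The function J̃, defined on M(𝒳) × M̃_*(𝒳×𝒳) × M(𝒳×ℕ^𝒳) (probability measures on 𝒳 and finite symmetric measures on 𝒳×𝒳 with the Euclidean topology, probability measures on the countable discrete set 𝒳×ℕ^𝒳 with the topology of weak convergence) by J̃((ω,ϖ),ν) = H(ν‖Q[ϖ,ν]) if (ϖ,ν) is sub-consistent and ν₁ = ω, and J̃((ω,ϖ),ν) = ∞ otherwise, is lower semicontinuous as a map into [0,∞]. -/

import Mathlib

set_option linter.unusedSectionVars false


open Filter Topology

namespace ColoredLDP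

noncomputable section

/-- Extended logarithm: `⊥` at nonpositive arguments. -/
def elog (x : ℝ) : EReal := if x ≤ 0 then (⊥ : EReal) else ((Real.log x : ℝ) : EReal)

open Classical in
/-- Relative entropy of finite measures on a finite set, with value `⊤` if
absolute continuity fails. -/
def relEntFin {Y : Type} [Fintype Y] (ν ρ : Y → ℝ) : EReal :=
  if ∀ y, ρ y = 0 → ν y = 0 then (((∑ y, ν y * Real.log (ν y / ρ y)) : ℝ) : EReal)
  else (⊤ : EReal)

open Classical in
/-- Relative entropy of measures on a countable set, with value `⊤` if absolute
continuity fails or the defining series is not (absolutely) summable. -/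
def relEntC {Y : Type} (ν ρ : Y → ℝ) : EReal :=
  if (∀ y, ρ y = 0 → ν y = 0) ∧ Summable (fun y => ν y * Real.log (ν y / ρ y)) then
    (((∑' y, ν y * Real.log (ν y / ρ y)) : ℝ) : EReal)
  else (⊤ : EReal)

variable {𝒳 : Type} [Fintype 𝒳] [DecidableEq 𝒳]

/-- `𝔥_C(ϖ‖ω) = H(ϖ‖Cω⊗ω) + ‖Cω⊗ω‖ − ‖ϖ‖`. -/
def hC (C : 𝒳 → 𝒳 → ℝ) (ϖ : 𝒳 → 𝒳 → ℝ) (ω : 𝒳 → ℝ) : EReal :=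
  relEntFin (fun q : 𝒳 × 𝒳 => ϖ q.1 q.2) (fun q : 𝒳 × 𝒳 => C q.1 q.2 * ω q.1 * ω q.2)
    + (((∑ a, ∑ b, C a b * ω a * ω b) : ℝ) : EReal) - (((∑ a, ∑ b, ϖ a b) : ℝ) : EReal)

/-- A probability mass function. -/
def IsPMF {Y : Type} (ν : Y → ℝ) : Prop := (∀ y, 0 ≤ ν y) ∧ HasSum ν 1

/-- The `𝒳`-marginal `ν₁` of a measure on `𝒳 × ℕ^𝒳`. -/
def marg (ν : 𝒳 × (𝒳 → ℕ) → ℝ) (a : 𝒳) : ℝ := ∑' ℓ : 𝒳 → ℕ, ν (a, ℓ)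

/-- The measure `⟨ν(·,ℓ), ℓ(·)⟩`, the second component of `Φ(ν)`. -/
def pairOf (ν : 𝒳 × (𝒳 → ℕ) → ℝ) (a b : 𝒳) : ℝ := ∑' ℓ : 𝒳 → ℕ, ν (a, ℓ) * (ℓ b : ℝ)

/-- Sub-consistency of a pair `(ϖ, ν)`. -/
def SubConsistent (ϖ : 𝒳 → 𝒳 → ℝ) (ν : 𝒳 × (𝒳 → ℕ) → ℝ) : Prop :=
  ∀ a b : 𝒳, (∑' ℓ : 𝒳 → ℕ, ENNReal.ofReal (ν (a, ℓ) * (ℓ b : ℝ))) ≤ ENNReal.ofReal (ϖ a b)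

/-- The measure with colour law `ω` under which the neighbourhood counts are independent
Poisson variables with means `ϖ(a,b)/ω(a)`; `Q[ϖ,ν]` is `Qof ϖ ν₁`. -/
def Qof (ϖ : 𝒳 → 𝒳 → ℝ) (ω : 𝒳 → ℝ) (x : 𝒳 × (𝒳 → ℕ)) : ℝ :=
  ω x.1 * ∏ b : 𝒳,
    Real.exp (-(ϖ x.1 b / ω x.1)) * (ϖ x.1 b / ω x.1) ^ (x.2 b) / (Nat.factorial (x.2 b) : ℝ)

/-- The set of possible (ordered) edges on `n` vertices. -/
abbrev Edge (n : ℕ) := {e : Fin n × Fin n // e.1 < e.2}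

/-- A coloured graph on `n` vertices: a colouring together with an edge set. -/
abbrev Config (𝒳 : Type) (n : ℕ) := (Fin n → 𝒳) × Finset (Edge n)

/-- The probability weight of a configuration under the coloured random graph law. -/
def wt {n : ℕ} (μ : 𝒳 → ℝ) (p : 𝒳 → 𝒳 → ℝ) (x : Config 𝒳 n) : ℝ :=
  (∏ v, μ (x.1 v)) *
    ∏ e : Edge n,
      if e ∈ x.2 then p (x.1 e.1.1) (x.1 e.1.2) else 1 - p (x.1 e.1.1) (x.1 e.1.2)

/-- The law of the coloured random graph, evaluated on an event. -/
def graphP (𝒳 : Type) [Fintype 𝒳] [DecidableEq 𝒳] (n : ℕ) (μ : 𝒳 → ℝ) (p : 𝒳 → 𝒳 → ℝ)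
    (A : Set (Config 𝒳 n)) : ℝ :=
  ∑ x : Config 𝒳 n, A.indicator (wt μ p) x

/-- Conditional probability for the coloured random graph. -/
def condP (𝒳 : Type) [Fintype 𝒳] [DecidableEq 𝒳] (n : ℕ) (μ : 𝒳 → ℝ) (p : 𝒳 → 𝒳 → ℝ)
    (A B : Set (Config 𝒳 n)) : ℝ :=
  graphP 𝒳 n μ p (A ∩ B) / graphP 𝒳 n μ p B

/-- Conditional expectation for the coloured random graph. -/
def condE (𝒳 : Type) [Fintype 𝒳] [DecidableEq 𝒳] (n : ℕ) (μ : 𝒳 → ℝ) (p : 𝒳 → 𝒳 → ℝ)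
    (f : Config 𝒳 n → ℝ) (B : Set (Config 𝒳 n)) : ℝ :=
  (∑ x : Config 𝒳 n, B.indicator (fun x => wt μ p x * f x) x) / graphP 𝒳 n μ p B

/-- The empirical colour measure `L¹`. -/
def empColor {n : ℕ} (x : Config 𝒳 n) (a : 𝒳) : ℝ :=
  ((Finset.univ.filter (fun v : Fin n => x.1 v = a)).card : ℝ) / n

/-- The empirical pair measure `L²`. -/
def empPair {n : ℕ} (x : Config 𝒳 n) (a b : 𝒳) : ℝ :=
  (∑ e ∈ x.2, ((if x.1 e.1.1 = a ∧ x.1 e.1.2 = b then (1:ℝ) else 0) +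
    (if x.1 e.1.2 = a ∧ x.1 e.1.1 = b then (1:ℝ) else 0))) / n

/-- The number of neighbours of `v` of colour `b`. -/
def locDeg {n : ℕ} (x : Config 𝒳 n) (v : Fin n) (b : 𝒳) : ℕ :=
  (x.2.filter (fun e => (e.1.1 = v ∧ x.1 e.1.2 = b) ∨ (e.1.2 = v ∧ x.1 e.1.1 = b))).card

/-- The empirical neighbourhood measure `M`. -/
def empNbhd {n : ℕ} (x : Config 𝒳 n) (y : 𝒳 × (𝒳 → ℕ)) : ℝ :=
  ((Finset.univ.filter (fun v : Fin n =>
      x.1 v = y.1 ∧ (fun b => locDeg x v b) = y.2)).card : ℝ) / n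

/-- Total variation distance between measures on `𝒳 × ℕ^𝒳`. -/
def dTV (ν ν' : 𝒳 × (𝒳 → ℕ) → ℝ) : ℝ := (1 / 2) * ∑' y, |ν y - ν' y|

end
end ColoredLDP

namespace ColoredLDP


section Aux

open ENNReal

lemma lsc_tsum {α ι : Type*} [TopologicalSpace α] (f : ι → α → ℝ≥0∞)
    (hf : ∀ i, Continuous (f i)) : LowerSemicontinuous fun x => ∑' i, f i x := by
  intro x₀ r hr
  have hr' : r < ∑' i, f i x₀ := hr
  rw [ENNReal.tsum_eq_iSup_sum, lt_iSup_iff] at hr'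
  obtain ⟨s, hs⟩ := hr'
  have hc : Continuous fun x => ∑ i ∈ s, f i x := continuous_finset_sum s fun i _ => hf i
  filter_upwards [hc.continuousAt.preimage_mem_nhds (Ioi_mem_nhds hs)] with x hx
  exact lt_of_lt_of_le hx (Summable.sum_le_tsum s (fun i _ => zero_le) ENNReal.summable)

lemma pois_nonneg {l : ℝ} (hl : 0 ≤ l) (k : ℕ) :
    0 ≤ Real.exp (-l) * l ^ k / (Nat.factorial k : ℝ) := by positivity

lemma pois_le_one {l : ℝ} (hl : 0 ≤ l) (k : ℕ) :
    Real.exp (-l) * l ^ k / (Nat.factorial k : ℝ) ≤ 1 := by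
  have h1 : l ^ k / (Nat.factorial k : ℝ) ≤ Real.exp l := by
    refine le_trans ?_ (Real.sum_le_exp_of_nonneg hl (k + 1))
    exact Finset.single_le_sum (f := fun i => l ^ i / (Nat.factorial i : ℝ))
      (fun i _ => by positivity) (Finset.self_mem_range_succ k)
  calc Real.exp (-l) * l ^ k / (Nat.factorial k : ℝ)
      = Real.exp (-l) * (l ^ k / (Nat.factorial k : ℝ)) := by ring
    _ ≤ Real.exp (-l) * Real.exp l :=
        mul_le_mul_of_nonneg_left h1 (Real.exp_pos _).le
    _ = 1 := by rw [← Real.exp_add]; simp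

lemma hasSum_pois (l : ℝ) :
    HasSum (fun k : ℕ => Real.exp (-l) * l ^ k / (Nat.factorial k : ℝ)) 1 := by
  have h := NormedSpace.expSeries_div_hasSum_exp l
  rw [← Real.exp_eq_exp_ℝ] at h
  have h2 := h.mul_left (Real.exp (-l))
  have h3 : Real.exp (-l) * Real.exp l = 1 := by rw [← Real.exp_add]; simp
  rw [h3] at h2
  convert h2 using 2 with k
  · rfl
  ring

lemma tsum_pi_fin : ∀ (n : ℕ) (g : Fin n → ℕ → ℝ≥0∞),
    ∑' ℓ : Fin n → ℕ, ∏ i, g i (ℓ i) = ∏ i, ∑' k, g i k := by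
  intro n
  induction n with
  | zero =>
    intro g
    simp only [Finset.univ_eq_empty, Finset.prod_empty]
    exact tsum_eq_single (fun i => i.elim0) (fun b hb => absurd (Subsingleton.elim b _) hb)
  | succ n ih =>
    intro g
    have h1 : ∀ p : ℕ × (Fin n → ℕ),
        (∏ i, g i ((Fin.consEquiv fun _ : Fin (n + 1) => ℕ) p i)) =
        g 0 p.1 * ∏ i : Fin n, g i.succ (p.2 i) := by
      intro p
      rw [Fin.prod_univ_succ]
      simp [Fin.consEquiv]
    rw [← (Fin.consEquiv fun _ : Fin (n + 1) => ℕ).tsum_eq]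
    calc ∑' p : ℕ × (Fin n → ℕ), ∏ i, g i ((Fin.consEquiv fun _ : Fin (n + 1) => ℕ) p i)
        = ∑' p : ℕ × (Fin n → ℕ), g 0 p.1 * ∏ i : Fin n, g i.succ (p.2 i) := tsum_congr h1
      _ = ∑' (k : ℕ) (ℓ : Fin n → ℕ), g 0 k * ∏ i : Fin n, g i.succ (ℓ i) :=
          ENNReal.tsum_prod'
      _ = ∑' k : ℕ, g 0 k * ∑' ℓ : Fin n → ℕ, ∏ i : Fin n, g i.succ (ℓ i) := by
          exact tsum_congr fun k => ENNReal.tsum_mul_left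
      _ = (∑' k, g 0 k) * ∑' ℓ : Fin n → ℕ, ∏ i : Fin n, g i.succ (ℓ i) :=
          ENNReal.tsum_mul_right
      _ = ∏ i, ∑' k, g i k := by
          rw [ih (fun i => g i.succ), Fin.prod_univ_succ]

lemma tsum_pi_fintype {ι : Type} [Fintype ι] (g : ι → ℕ → ℝ≥0∞) :
    ∑' ℓ : ι → ℕ, ∏ i, g i (ℓ i) = ∏ i, ∑' k, g i k := by
  classical
  let e := Fintype.equivFin ι
  calc ∑' ℓ : ι → ℕ, ∏ i, g i (ℓ i)
      = ∑' m : Fin (Fintype.card ι) → ℕ,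
          ∏ i, g i ((Equiv.arrowCongr e.symm (Equiv.refl ℕ)) m i) :=
        ((Equiv.arrowCongr e.symm (Equiv.refl ℕ)).tsum_eq
          (fun ℓ : ι → ℕ => ∏ i, g i (ℓ i))).symm
    _ = ∑' m : Fin (Fintype.card ι) → ℕ, ∏ j, g (e.symm j) (m j) := by
        refine tsum_congr fun m => ?_
        rw [← e.symm.prod_comp
          (fun i => g i ((Equiv.arrowCongr e.symm (Equiv.refl ℕ)) m i))]
        refine Finset.prod_congr rfl fun j _ => ?_
        simp [Equiv.arrowCongr]
    _ = ∏ j, ∑' k, g (e.symm j) k := tsum_pi_fin _ _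
    _ = ∏ i, ∑' k, g i k := e.symm.prod_comp fun i => ∑' k, g i k

variable {𝒳 : Type} [Fintype 𝒳] [DecidableEq 𝒳]

lemma qof_nonneg {ϖ : 𝒳 → 𝒳 → ℝ} {ω : 𝒳 → ℝ} (hϖ : ∀ a b, 0 ≤ ϖ a b) (hω : ∀ a, 0 ≤ ω a)
    (x : 𝒳 × (𝒳 → ℕ)) : 0 ≤ Qof ϖ ω x := by
  refine mul_nonneg (hω _) (Finset.prod_nonneg fun b _ => ?_)
  exact pois_nonneg (div_nonneg (hϖ _ _) (hω _)) _

lemma qof_le {ϖ : 𝒳 → 𝒳 → ℝ} {ω : 𝒳 → ℝ} (hϖ : ∀ a b, 0 ≤ ϖ a b) (hω : ∀ a, 0 ≤ ω a)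
    (x : 𝒳 × (𝒳 → ℕ)) : Qof ϖ ω x ≤ ω x.1 := by
  have h1 : (∏ b : 𝒳, Real.exp (-(ϖ x.1 b / ω x.1)) * (ϖ x.1 b / ω x.1) ^ (x.2 b) /
      (Nat.factorial (x.2 b) : ℝ)) ≤ 1 :=
    Finset.prod_le_one (fun b _ => pois_nonneg (div_nonneg (hϖ _ _) (hω _)) _)
      (fun b _ => pois_le_one (div_nonneg (hϖ _ _) (hω _)) _)
  calc Qof ϖ ω x ≤ ω x.1 * 1 := mul_le_mul_of_nonneg_left h1 (hω _)
    _ = ω x.1 := mul_one _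

lemma qof_fiber_ofReal {ϖ : 𝒳 → 𝒳 → ℝ} {ω : 𝒳 → ℝ} (hϖ : ∀ a b, 0 ≤ ϖ a b)
    (hω : ∀ a, 0 ≤ ω a) (a : 𝒳) :
    ∑' ℓ : 𝒳 → ℕ, ENNReal.ofReal (Qof ϖ ω (a, ℓ)) = ENNReal.ofReal (ω a) := by
  by_cases h : ω a = 0
  · simp [Qof, h]
  · have hterm : ∀ ℓ : 𝒳 → ℕ, ENNReal.ofReal (Qof ϖ ω (a, ℓ)) =
        ENNReal.ofReal (ω a) * ∏ b, ENNReal.ofReal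
          (Real.exp (-(ϖ a b / ω a)) * (ϖ a b / ω a) ^ (ℓ b) / (Nat.factorial (ℓ b) : ℝ)) := by
      intro ℓ
      rw [Qof, ENNReal.ofReal_mul (hω a), ENNReal.ofReal_prod_of_nonneg
        (fun b _ => pois_nonneg (div_nonneg (hϖ a b) (hω a)) _)]
    rw [tsum_congr hterm, ENNReal.tsum_mul_left,
      tsum_pi_fintype (fun b k => ENNReal.ofReal
        (Real.exp (-(ϖ a b / ω a)) * (ϖ a b / ω a) ^ k / (Nat.factorial k : ℝ)))]
    have hb : ∀ b : 𝒳, (∑' k : ℕ, ENNReal.ofReal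
        (Real.exp (-(ϖ a b / ω a)) * (ϖ a b / ω a) ^ k / (Nat.factorial k : ℝ))) = 1 := by
      intro b
      have hs := hasSum_pois (ϖ a b / ω a)
      rw [← ENNReal.ofReal_tsum_of_nonneg
        (fun k => pois_nonneg (div_nonneg (hϖ a b) (hω a)) k) hs.summable, hs.tsum_eq,
        ENNReal.ofReal_one]
    simp [hb]

lemma qof_hasSum {ϖ : 𝒳 → 𝒳 → ℝ} {ω : 𝒳 → ℝ} (hϖ : ∀ a b, 0 ≤ ϖ a b)
    (hω : ∀ a, 0 ≤ ω a) (hω1 : ∑ a, ω a = 1) : HasSum (Qof ϖ ω) 1 := by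
  have htot : ∑' x : 𝒳 × (𝒳 → ℕ), ENNReal.ofReal (Qof ϖ ω x) = 1 := by
    rw [ENNReal.tsum_prod']
    calc (∑' (a : 𝒳) (ℓ : 𝒳 → ℕ), ENNReal.ofReal (Qof ϖ ω (a, ℓ)))
        = ∑' a : 𝒳, ENNReal.ofReal (ω a) := tsum_congr fun a => qof_fiber_ofReal hϖ hω a
      _ = ∑ a : 𝒳, ENNReal.ofReal (ω a) := tsum_fintype _
      _ = ENNReal.ofReal (∑ a, ω a) := (ENNReal.ofReal_sum_of_nonneg (fun a _ => hω a)).symm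
      _ = 1 := by rw [hω1, ENNReal.ofReal_one]
  have hsum : Summable (Qof ϖ ω) := by
    have h := ENNReal.summable_toReal (by rw [htot]; exact ENNReal.one_ne_top)
    convert h using 1
    funext x
    rw [ENNReal.toReal_ofReal (qof_nonneg hϖ hω x)]
  have h1 : ∑' x, Qof ϖ ω x = 1 := by
    have h2 : ENNReal.ofReal (∑' x, Qof ϖ ω x) = ENNReal.ofReal 1 := by
      rw [ENNReal.ofReal_tsum_of_nonneg (qof_nonneg hϖ hω) hsum, htot, ENNReal.ofReal_one]
    rwa [ENNReal.ofReal_eq_ofReal_iff (tsum_nonneg (qof_nonneg hϖ hω)) zero_le_one] at h2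
  rw [← h1]
  exact hsum.hasSum

lemma term_ge_sub {p q : ℝ} (hν : 0 ≤ p) (hρ : 0 ≤ q) (hac : q = 0 → p = 0) :
    p - q ≤ p * Real.log (p / q) := by
  rcases eq_or_lt_of_le hν with h0 | hp
  · simp only [← h0, zero_mul, zero_sub]
    linarith
  · have hq : 0 < q := by
      rcases eq_or_lt_of_le hρ with hq0 | hq0
      · exact absurd (hac hq0.symm) (ne_of_gt hp)
      · exact hq0
    have key := Real.log_le_sub_one_of_pos (div_pos hq hp)
    rw [Real.log_div (ne_of_gt hq) (ne_of_gt hp)] at key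
    rw [Real.log_div (ne_of_gt hp) (ne_of_gt hq)]
    have h3 : p * (Real.log q - Real.log p) ≤ p * (q / p - 1) :=
      mul_le_mul_of_nonneg_left key hp.le
    have h4 : p * (q / p - 1) = q - p := by field_simp
    nlinarith [h3, h4]

lemma term_ge_t {p q t : ℝ} (hν : 0 ≤ p) (hρ : 0 ≤ q) (ht : 0 < t) (hac : q = 0 → p = 0) :
    p * (1 + Real.log t) - q * t ≤ p * Real.log (p / q) := by
  rcases eq_or_lt_of_le hν with h0 | hp
  · simp only [← h0, zero_mul, zero_sub]
    nlinarith [mul_nonneg hρ ht.le]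
  · have hq : 0 < q := by
      rcases eq_or_lt_of_le hρ with hq0 | hq0
      · exact absurd (hac hq0.symm) (ne_of_gt hp)
      · exact hq0
    have key := Real.log_le_sub_one_of_pos (show 0 < t * q / p by positivity)
    rw [Real.log_div (by positivity) (ne_of_gt hp),
      Real.log_mul (ne_of_gt ht) (ne_of_gt hq)] at key
    rw [Real.log_div (ne_of_gt hp) (ne_of_gt hq)]
    have h3 : p * (Real.log t + Real.log q - Real.log p) ≤ p * (t * q / p - 1) :=
      mul_le_mul_of_nonneg_left key hp.le
    have h4 : p * (t * q / p - 1) = t * q - p := by field_simp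
    nlinarith [h3, h4]

lemma relEntC_ge {Y : Type} (ν ρ : Y → ℝ) (hν0 : ∀ y, 0 ≤ ν y) (hν1 : HasSum ν 1)
    (hρ0 : ∀ y, 0 ≤ ρ y) (hρ1 : HasSum ρ 1) (F : Finset Y) (t : Y → ℝ)
    (ht : ∀ y ∈ F, 0 < t y) :
    ((∑ y ∈ F, (ν y * (1 + Real.log (t y)) - ρ y * t y) - (1 - ∑ y ∈ F, ρ y) : ℝ) : EReal)
      ≤ relEntC ν ρ := by
  classical
  rw [relEntC]
  split_ifs with h
  · obtain ⟨hac, hsum⟩ := h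
    rw [EReal.coe_le_coe_iff]
    set g : Y → ℝ := fun y => ν y * Real.log (ν y / ρ y) with hg
    have hνs := hν1.summable
    have hρs := hρ1.summable
    have hsplit : ∑ y ∈ F, g y + ∑' y : ((F : Set Y)ᶜ : Set Y), g y = ∑' y, g y :=
      Summable.sum_add_tsum_subtype_compl hsum F
    have h1 : ∑ y ∈ F, (ν y * (1 + Real.log (t y)) - ρ y * t y) ≤ ∑ y ∈ F, g y :=
      Finset.sum_le_sum fun y hy => term_ge_t (hν0 y) (hρ0 y) (ht y hy) (fun hz => hac y hz)
    have h2 : ∑' y : ((F : Set Y)ᶜ : Set Y), (ν y - ρ y) ≤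
        ∑' y : ((F : Set Y)ᶜ : Set Y), g y := by
      refine Summable.tsum_le_tsum (fun y => term_ge_sub (hν0 y) (hρ0 y) (fun hz => hac y hz)) ?_ ?_
      · exact (hνs.sub hρs).subtype _
      · exact hsum.subtype _
    have h3 : ∑' y : ((F : Set Y)ᶜ : Set Y), (ν y - ρ y) =
        (∑' y : ((F : Set Y)ᶜ : Set Y), ν y) - ∑' y : ((F : Set Y)ᶜ : Set Y), ρ y :=
      Summable.tsum_sub (hνs.subtype _) (hρs.subtype _)
    have h4 : (0 : ℝ) ≤ ∑' y : ((F : Set Y)ᶜ : Set Y), ν y :=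
      tsum_nonneg fun y => hν0 y
    have h5 : ∑' y : ((F : Set Y)ᶜ : Set Y), ρ y = 1 - ∑ y ∈ F, ρ y := by
      have hq : ∑ y ∈ F, ρ y + ∑' y : ((F : Set Y)ᶜ : Set Y), ρ y = 1 := by
        have hq' := Summable.sum_add_tsum_subtype_compl hρs F
        rw [hρ1.tsum_eq] at hq'
        exact hq'
      linarith
    rw [h3, h5] at h2
    linarith
  · exact le_top

lemma exists_good_finset {Y : Type} (ν ρ : Y → ℝ) (hν0 : ∀ y, 0 ≤ ν y)
    (hρ0 : ∀ y, 0 ≤ ρ y) (hρ1 : HasSum ρ 1) (c : ℝ) (hc : (c : EReal) < relEntC ν ρ) :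
    ∃ (F : Finset Y) (t : Y → ℝ), (∀ y ∈ F, 0 < t y) ∧
      c < ∑ y ∈ F, (ν y * (1 + Real.log (t y)) - ρ y * t y) - (1 - ∑ y ∈ F, ρ y) := by
  classical
  by_cases hac : ∀ y, ρ y = 0 → ν y = 0
  · set g : Y → ℝ := fun y => ν y * Real.log (ν y / ρ y) with hg
    have hterm : ∀ (ε : ℝ) (y : Y), ν y ≠ 0 →
        ν y * (1 + Real.log (if ν y = 0 then ε else ν y / ρ y)) -
          ρ y * (if ν y = 0 then ε else ν y / ρ y) = g y := by
      intro ε y hy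
      have hρy : ρ y ≠ 0 := fun hz => hy (hac y hz)
      rw [if_neg hy]
      have : ρ y * (ν y / ρ y) = ν y := by field_simp
      rw [this, hg]
      ring
    by_cases hs : Summable g
    · -- absolutely continuous and summable
      have hval : relEntC ν ρ = ((∑' y, g y : ℝ) : EReal) := by
        rw [relEntC, if_pos ⟨hac, hs⟩]
      rw [hval, EReal.coe_lt_coe_iff] at hc
      set I := ∑' y, g y with hI
      set δ : ℝ := (I - c) / 4 with hδ
      have hδpos : 0 < δ := by rw [hδ]; linarith
      have h1 : ∀ᶠ F : Finset Y in atTop, I - δ < ∑ y ∈ F, g y :=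
        hs.hasSum.eventually (eventually_gt_nhds (by linarith))
      have h2 : ∀ᶠ F : Finset Y in atTop, 1 - δ < ∑ y ∈ F, ρ y :=
        hρ1.eventually (eventually_gt_nhds (by linarith))
      obtain ⟨F, hF1, hF2⟩ := (h1.and h2).exists
      refine ⟨F, fun y => if ν y = 0 then δ else ν y / ρ y, fun y _ => ?_, ?_⟩
      · dsimp only
        by_cases hy : ν y = 0
        · rw [if_pos hy]; exact hδpos
        · rw [if_neg hy]
          have hρy : ρ y ≠ 0 := fun hz => hy (hac y hz)
          exact div_pos (lt_of_le_of_ne (hν0 y) (Ne.symm hy)) (lt_of_le_of_ne (hρ0 y) (Ne.symm hρy))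
      · dsimp only
        have hρF : ∑ y ∈ F, ρ y ≤ 1 := by
          rw [← hρ1.tsum_eq]
          exact Summable.sum_le_tsum F (fun y _ => hρ0 y) hρ1.summable
        have hbound : ∀ y ∈ F,
            g y - ρ y * δ ≤ ν y * (1 + Real.log (if ν y = 0 then δ else ν y / ρ y)) -
              ρ y * (if ν y = 0 then δ else ν y / ρ y) := by
          intro y _
          by_cases hy : ν y = 0
          · rw [if_pos hy, hy]
            have : g y = 0 := by rw [hg]; simp [hy]
            rw [this]
            simp
          · rw [hterm δ y hy]
            have : 0 ≤ ρ y * δ := mul_nonneg (hρ0 y) hδpos.le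
            linarith
        have hsumF : ∑ y ∈ F, (g y - ρ y * δ) ≤
            ∑ y ∈ F, (ν y * (1 + Real.log (if ν y = 0 then δ else ν y / ρ y)) -
              ρ y * (if ν y = 0 then δ else ν y / ρ y)) := Finset.sum_le_sum hbound
        rw [Finset.sum_sub_distrib, ← Finset.sum_mul] at hsumF
        have hρF0 : 0 ≤ ∑ y ∈ F, ρ y := Finset.sum_nonneg fun y _ => hρ0 y
        have hmul : (∑ y ∈ F, ρ y) * δ ≤ δ := by
          nlinarith
        linarith
    · -- absolutely continuous but not summable
      set gp : Y → ℝ := fun y => max (g y) 0 with hgp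
      have hgm : Summable fun y => max (-g y) 0 := by
        refine Summable.of_nonneg_of_le (fun y => le_max_right _ _) (fun y => ?_) hρ1.summable
        have h1 := term_ge_sub (hν0 y) (hρ0 y) (fun hz => hac y hz)
        have h2 : -g y ≤ ρ y := by
          have := hν0 y
          rw [hg]
          simp only []
          linarith
        exact max_le h2 (hρ0 y)
      have hgpns : ¬ Summable gp := by
        intro h
        apply hs
        have hrep : g = fun y => gp y - max (-g y) 0 := by
          funext y
          rw [hgp]
          simp only []
          rw [max_zero_sub_max_neg_zero_eq_self]
        rw [hrep]
        exact h.sub hgm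
      have hex : ∃ F : Finset Y, c + 2 < ∑ y ∈ F, gp y := by
        by_contra hb
        push_neg at hb
        exact hgpns (summable_of_sum_le (fun y => le_max_right _ _) hb)
      obtain ⟨F₀, hF₀⟩ := hex
      set F : Finset Y := F₀.filter (fun y => 0 < g y) with hF
      have hFsum : ∑ y ∈ F, g y = ∑ y ∈ F₀, gp y := by
        rw [hF, Finset.sum_filter]
        refine Finset.sum_congr rfl fun y _ => ?_
        rcases le_or_gt (g y) 0 with h | h
        · rw [if_neg (not_lt.mpr h), hgp]; simp [max_eq_right h]
        · rw [if_pos h, hgp]; simp [max_eq_left h.le]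
      refine ⟨F, fun y => if ν y = 0 then 1 else ν y / ρ y, fun y _ => ?_, ?_⟩
      · dsimp only
        by_cases hy : ν y = 0
        · rw [if_pos hy]; exact one_pos
        · rw [if_neg hy]
          have hρy : ρ y ≠ 0 := fun hz => hy (hac y hz)
          exact div_pos (lt_of_le_of_ne (hν0 y) (Ne.symm hy)) (lt_of_le_of_ne (hρ0 y) (Ne.symm hρy))
      · dsimp only
        have heq : ∀ y ∈ F, ν y * (1 + Real.log (if ν y = 0 then 1 else ν y / ρ y)) -
            ρ y * (if ν y = 0 then 1 else ν y / ρ y) = g y := by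
          intro y hy
          have hgy : 0 < g y := (Finset.mem_filter.mp hy).2
          have hνy : ν y ≠ 0 := by
            intro hz
            rw [hg] at hgy
            simp [hz] at hgy
          exact hterm 1 y hνy
        rw [Finset.sum_congr rfl heq, hFsum]
        have hρF0 : 0 ≤ ∑ y ∈ F, ρ y := Finset.sum_nonneg fun y _ => hρ0 y
        linarith
  · -- absolute continuity fails
    push_neg at hac
    obtain ⟨y₀, hρy, hνy⟩ := hac
    have hνpos : 0 < ν y₀ := lt_of_le_of_ne (hν0 y₀) (Ne.symm hνy)
    refine ⟨{y₀}, fun _ => Real.exp ((c + 1) / ν y₀), fun y _ => Real.exp_pos _, ?_⟩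
    rw [Finset.sum_singleton, Finset.sum_singleton, hρy, Real.log_exp]
    have hmul : ν y₀ * (1 + (c + 1) / ν y₀) = ν y₀ + (c + 1) := by
      field_simp
    rw [hmul]
    linarith

lemma summable_fiber {ν : 𝒳 × (𝒳 → ℕ) → ℝ} (h : Summable ν) (a : 𝒳) :
    Summable fun ℓ : 𝒳 → ℕ => ν (a, ℓ) := by
  have hinj : Function.Injective (fun ℓ : 𝒳 → ℕ => ((a, ℓ) : 𝒳 × (𝒳 → ℕ))) := by
    intro l1 l2 hl
    simpa using congrArg Prod.snd hl
  exact h.comp_injective hinj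

lemma ofReal_marg {ν : 𝒳 × (𝒳 → ℕ) → ℝ} (h0 : ∀ x, 0 ≤ ν x) (hs : Summable ν) (a : 𝒳) :
    ENNReal.ofReal (marg ν a) = ∑' ℓ : 𝒳 → ℕ, ENNReal.ofReal (ν (a, ℓ)) :=
  ENNReal.ofReal_tsum_of_nonneg (fun ℓ => h0 _) (summable_fiber hs a)

lemma sum_marg {ν : 𝒳 × (𝒳 → ℕ) → ℝ} (h : HasSum ν 1) : ∑ a, marg ν a = 1 := by
  calc ∑ a, marg ν a = ∑' a, ∑' ℓ : 𝒳 → ℕ, ν (a, ℓ) := (tsum_fintype _).symm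
    _ = ∑' p : 𝒳 × (𝒳 → ℕ), ν p := (Summable.tsum_prod' h.summable (fun b => summable_fiber h.summable b)).symm
    _ = 1 := h.tsum_eq

lemma continuousAt_finset_sum' {X β : Type*} [TopologicalSpace X] (s : Finset β)
    (f : β → X → ℝ) {x : X} (h : ∀ b ∈ s, ContinuousAt (f b) x) :
    ContinuousAt (fun y => ∑ b ∈ s, f b y) x := by
  classical
  induction s using Finset.induction_on with
  | empty => simpa using continuousAt_const
  | insert b s hb ih =>
    simp only [Finset.sum_insert hb]
    exact (h _ (Finset.mem_insert_self _ _)).add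
      (ih fun b hbs => h b (Finset.mem_insert_of_mem hbs))

lemma continuousAt_finset_prod' {X β : Type*} [TopologicalSpace X] (s : Finset β)
    (f : β → X → ℝ) {x : X} (h : ∀ b ∈ s, ContinuousAt (f b) x) :
    ContinuousAt (fun y => ∏ b ∈ s, f b y) x := by
  classical
  induction s using Finset.induction_on with
  | empty => simpa using continuousAt_const
  | insert b s hb ih =>
    simp only [Finset.prod_insert hb]
    exact (h _ (Finset.mem_insert_self _ _)).mul
      (ih fun b hbs => h b (Finset.mem_insert_of_mem hbs))

abbrev MSpace (𝒳 : Type) [Fintype 𝒳] [DecidableEq 𝒳] :=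
  {ωz : 𝒳 → ℝ // (∀ a, 0 ≤ ωz a) ∧ (∑ a, ωz a) = 1} ×
    {ϖz : 𝒳 → 𝒳 → ℝ // (∀ a b, 0 ≤ ϖz a b) ∧ ∀ a b, ϖz a b = ϖz b a} ×
      {νz : (𝒳 × (𝒳 → ℕ)) → ℝ // IsPMF νz}

lemma qof_continuousAt (x : 𝒳 × (𝒳 → ℕ)) (z₀ : MSpace 𝒳) :
    ContinuousAt (fun z : MSpace 𝒳 => Qof z.2.1.1 z.1.1 x) z₀ := by
  have hω : Continuous fun z : MSpace 𝒳 => (z.1.1 : 𝒳 → ℝ) x.1 :=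
    (continuous_apply x.1).comp (continuous_subtype_val.comp continuous_fst)
  have hϖ : ∀ b : 𝒳, Continuous fun z : MSpace 𝒳 => z.2.1.1 x.1 b := fun b =>
    (continuous_apply b).comp ((continuous_apply x.1).comp
      (continuous_subtype_val.comp (continuous_fst.comp continuous_snd)))
  by_cases h : z₀.1.1 x.1 = 0
  · -- squeeze to zero
    have hQ0 : Qof z₀.2.1.1 z₀.1.1 x = 0 := by
      rw [Qof, h, zero_mul]
    rw [ContinuousAt, hQ0]
    refine squeeze_zero (fun z => qof_nonneg z.2.1.2.1 z.1.2.1 x)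
      (fun z => qof_le z.2.1.2.1 z.1.2.1 x) ?_
    have := hω.continuousAt (x := z₀)
    rwa [ContinuousAt, h] at this
  · unfold Qof
    refine ContinuousAt.mul hω.continuousAt ?_
    refine continuousAt_finset_prod' _ _ fun b _ => ?_
    have hdiv : ContinuousAt (fun z : MSpace 𝒳 => z.2.1.1 x.1 b / z.1.1 x.1) z₀ :=
      (hϖ b).continuousAt.div hω.continuousAt h
    exact ((hdiv.neg.rexp).mul (hdiv.pow _)).div_const _

end Aux

open Classical in
/-- Lemma 5.2: the function `J̃` is lower semicontinuous on
`M(𝒳) × M̃_*(𝒳×𝒳) × M(𝒳×ℕ^𝒳)`. -/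
theorem Jtilde_lsc (𝒳 : Type) [Fintype 𝒳] [DecidableEq 𝒳] :
    LowerSemicontinuous
      (fun z : {ωz : 𝒳 → ℝ // (∀ a, 0 ≤ ωz a) ∧ (∑ a, ωz a) = 1} ×
          {ϖz : 𝒳 → 𝒳 → ℝ // (∀ a b, 0 ≤ ϖz a b) ∧ ∀ a b, ϖz a b = ϖz b a} ×
          {νz : (𝒳 × (𝒳 → ℕ)) → ℝ // IsPMF νz} =>
        if SubConsistent z.2.1.1 z.2.2.1 ∧ marg z.2.2.1 = z.1.1 then
          relEntC z.2.2.1 (Qof z.2.1.1 (marg z.2.2.1))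
        else (⊤ : EReal)) := by
  intro z₀ y hy
  dsimp only at hy ⊢
  by_cases hP : SubConsistent z₀.2.1.1 z₀.2.2.1 ∧ marg z₀.2.2.1 = z₀.1.1
  · -- the constraint holds at z₀
    rw [if_pos hP, hP.2] at hy
    obtain ⟨c, hc1, hc2⟩ := EReal.exists_between_coe_real hy
    have hν : (∀ x, 0 ≤ z₀.2.2.1 x) ∧ HasSum z₀.2.2.1 1 := z₀.2.2.2
    have hρ1 : HasSum (Qof z₀.2.1.1 z₀.1.1) 1 :=
      qof_hasSum z₀.2.1.2.1 z₀.1.2.1 z₀.1.2.2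
    obtain ⟨F, t, ht, hΦ⟩ := exists_good_finset z₀.2.2.1 (Qof z₀.2.1.1 z₀.1.1) hν.1
      (qof_nonneg z₀.2.1.2.1 z₀.1.2.1) hρ1 c hc2
    have hΨcont : ContinuousAt (fun z : MSpace 𝒳 =>
        ∑ x ∈ F, (z.2.2.1 x * (1 + Real.log (t x)) - Qof z.2.1.1 z.1.1 x * t x) -
          (1 - ∑ x ∈ F, Qof z.2.1.1 z.1.1 x)) z₀ := by
      refine ContinuousAt.sub ?_ (ContinuousAt.sub continuousAt_const ?_)
      · refine continuousAt_finset_sum' _ _ fun x _ => ?_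
        refine ContinuousAt.sub (ContinuousAt.mul ?_ continuousAt_const)
          (ContinuousAt.mul (qof_continuousAt x z₀) continuousAt_const)
        exact ((continuous_apply x).comp
          (continuous_subtype_val.comp (continuous_snd.comp continuous_snd))).continuousAt
      · exact continuousAt_finset_sum' _ _ fun x _ => qof_continuousAt x z₀
    have hev : ∀ᶠ z : MSpace 𝒳 in 𝓝 z₀,
        c < ∑ x ∈ F, (z.2.2.1 x * (1 + Real.log (t x)) - Qof z.2.1.1 z.1.1 x * t x) -
          (1 - ∑ x ∈ F, Qof z.2.1.1 z.1.1 x) :=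
      ContinuousAt.eventually_lt continuousAt_const hΨcont hΦ
    filter_upwards [hev] with z hz
    by_cases hPz : SubConsistent z.2.1.1 z.2.2.1 ∧ marg z.2.2.1 = z.1.1
    · rw [if_pos hPz, hPz.2]
      have hνz : (∀ x, 0 ≤ z.2.2.1 x) ∧ HasSum z.2.2.1 1 := z.2.2.2
      have hle := relEntC_ge z.2.2.1 (Qof z.2.1.1 z.1.1) hνz.1 hνz.2
        (qof_nonneg z.2.1.2.1 z.1.2.1) (qof_hasSum z.2.1.2.1 z.1.2.1 z.1.2.2) F t ht
      exact lt_of_lt_of_le (lt_trans hc1 (EReal.coe_lt_coe_iff.mpr hz)) hle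
    · rw [if_neg hPz]
      exact lt_of_lt_of_le (lt_trans hc1 (EReal.coe_lt_coe_iff.mpr hz)) le_top
  · -- the constraint fails at z₀
    rw [if_neg hP] at hy
    have hev : ∀ᶠ z : MSpace 𝒳 in 𝓝 z₀,
        ¬(SubConsistent z.2.1.1 z.2.2.1 ∧ marg z.2.2.1 = z.1.1) := by
      by_cases hsub : SubConsistent z₀.2.1.1 z₀.2.2.1
      · -- marginal constraint must fail
        have hm : marg z₀.2.2.1 ≠ z₀.1.1 := fun h => hP ⟨hsub, h⟩
        have hνPMF : (∀ x, 0 ≤ z₀.2.2.1 x) ∧ HasSum z₀.2.2.1 1 := z₀.2.2.2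
        have hsm : ∑ a, marg z₀.2.2.1 a = 1 := sum_marg hνPMF.2
        have hex : ∃ a, z₀.1.1 a < marg z₀.2.2.1 a := by
          by_contra hcon
          push_neg at hcon
          apply hm
          funext a
          by_contra hne
          have hlt : marg z₀.2.2.1 a < z₀.1.1 a := lt_of_le_of_ne (hcon a) hne
          have hstrict : ∑ a', marg z₀.2.2.1 a' < ∑ a', z₀.1.1 a' :=
            Finset.sum_lt_sum (fun i _ => hcon i) ⟨a, Finset.mem_univ a, hlt⟩
          rw [hsm, z₀.1.2.2] at hstrict
          exact lt_irrefl 1 hstrict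
        obtain ⟨a, ha⟩ := hex
        set M : MSpace 𝒳 → ENNReal := fun z => ∑' ℓ : 𝒳 → ℕ, ENNReal.ofReal (z.2.2.1 (a, ℓ))
          with hM
        have hMlsc : LowerSemicontinuous M :=
          lsc_tsum (fun (ℓ : 𝒳 → ℕ) (z : MSpace 𝒳) => ENNReal.ofReal (z.2.2.1 (a, ℓ))) (fun ℓ => by
            exact ENNReal.continuous_ofReal.comp ((continuous_apply ((a, ℓ) : 𝒳 × (𝒳 → ℕ))).comp
              (continuous_subtype_val.comp (continuous_snd.comp continuous_snd))))
        have hkey : ∀ z : MSpace 𝒳, M z = ENNReal.ofReal (marg z.2.2.1 a) := by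
          intro z
          have hz : (∀ x, 0 ≤ z.2.2.1 x) ∧ HasSum z.2.2.1 1 := z.2.2.2
          exact (ofReal_marg hz.1 hz.2.summable a).symm
        have h0 : ENNReal.ofReal (z₀.1.1 a) < M z₀ := by
          rw [hkey]
          exact (ENNReal.ofReal_lt_ofReal_iff (lt_of_le_of_lt (z₀.1.2.1 a) ha)).mpr ha
        obtain ⟨r, hr1, hr2⟩ := exists_between h0
        have hev1 : ∀ᶠ z : MSpace 𝒳 in 𝓝 z₀, r < M z := hMlsc z₀ r hr2
        have hev2 : ∀ᶠ z : MSpace 𝒳 in 𝓝 z₀, ENNReal.ofReal (z.1.1 a) < r := by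
          have hcont : Continuous fun z : MSpace 𝒳 => ENNReal.ofReal (z.1.1 a) :=
            ENNReal.continuous_ofReal.comp
              ((continuous_apply a).comp (continuous_subtype_val.comp continuous_fst))
          exact ContinuousAt.eventually_lt hcont.continuousAt continuousAt_const hr1
        filter_upwards [hev1, hev2] with z h1 h2
        rintro ⟨-, hmeq⟩
        have heq : marg z.2.2.1 a = z.1.1 a := congrFun hmeq a
        rw [hkey, heq] at h1
        exact lt_irrefl r (lt_trans h1 h2)
      · -- sub-consistency must fail
        unfold SubConsistent at hsub
        push_neg at hsub
        obtain ⟨a, b, hab⟩ := hsub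
        set G : MSpace 𝒳 → ENNReal :=
          fun z => ∑' ℓ : 𝒳 → ℕ, ENNReal.ofReal (z.2.2.1 (a, ℓ) * ((ℓ b : ℕ) : ℝ)) with hG
        have hGlsc : LowerSemicontinuous G :=
          lsc_tsum (fun (ℓ : 𝒳 → ℕ) (z : MSpace 𝒳) => ENNReal.ofReal (z.2.2.1 (a, ℓ) * ((ℓ b : ℕ) : ℝ))) (fun ℓ => by
            exact ENNReal.continuous_ofReal.comp
              (Continuous.mul (((continuous_apply ((a, ℓ) : 𝒳 × (𝒳 → ℕ))).comp
                (continuous_subtype_val.comp (continuous_snd.comp continuous_snd))))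
                continuous_const))
        obtain ⟨r, hr1, hr2⟩ := exists_between hab
        have hev1 : ∀ᶠ z : MSpace 𝒳 in 𝓝 z₀, r < G z := hGlsc z₀ r hr2
        have hev2 : ∀ᶠ z : MSpace 𝒳 in 𝓝 z₀, ENNReal.ofReal (z.2.1.1 a b) < r := by
          have hcont : Continuous fun z : MSpace 𝒳 => ENNReal.ofReal (z.2.1.1 a b) :=
            ENNReal.continuous_ofReal.comp ((continuous_apply b).comp
              ((continuous_apply a).comp
                (continuous_subtype_val.comp (continuous_fst.comp continuous_snd))))
          exact ContinuousAt.eventually_lt hcont.continuousAt continuousAt_const hr1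
        filter_upwards [hev1, hev2] with z h1 h2
        rintro ⟨hSub, -⟩
        exact lt_irrefl r (lt_trans h1 (lt_of_le_of_lt (hSub a b) h2))
    filter_upwards [hev] with z hz
    rw [if_neg hz]
    exact hy

end ColoredLDP
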